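/- Fix a nonincreasing φ : [1,n] → [1,k]. Then every vᵢ (1 ≤ i ≤ k) and every xⱼ (1 ≤ j ≤ n+1) lies in the set of nonnegative integer combinations of elements of S_φ in the lattice H. -/
import Mathlib


/-!
The homology lattice `H` of the `(n+k+1)`-punctured sphere:
`H = (ℤx₁ ⊕ ⋯ ⊕ ℤx_{n+1} ⊕ ℤv₁ ⊕ ⋯ ⊕ ℤv_k)/(x₁+⋯+x_{n+1} − v₁−⋯−v_k)`,
with the classes `c_{i,j} = v_k + ⋯ + v_{j+1} − x₁ − ⋯ − x_i`.
All indices are 1-based, as in the paper.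
-/

open Finset

/-- The free abelian group on `x₁,…,x_{n+1},v₁,…,v_k`. -/
abbrev FreeH (n k : ℕ) := (Fin (n + 1) ⊕ Fin k) →₀ ℤ

/-- The generator `xᵢ` (for `1 ≤ i ≤ n+1`) of the free abelian group. -/
noncomputable def XX (n k : ℕ) (i : ℕ) : FreeH n k :=
  if h : 1 ≤ i ∧ i ≤ n + 1 then Finsupp.single (Sum.inl (⟨i - 1, by omega⟩ : Fin (n + 1))) 1
  else 0

/-- The generator `vⱼ` (for `1 ≤ j ≤ k`) of the free abelian group. -/
noncomputable def VV (n k : ℕ) (j : ℕ) : FreeH n k :=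
  if h : 1 ≤ j ∧ j ≤ k then Finsupp.single (Sum.inr (⟨j - 1, by omega⟩ : Fin k)) 1
  else 0

/-- The relation `x₁+⋯+x_{n+1} − (v₁+⋯+v_k)`. -/
noncomputable def relH (n k : ℕ) : FreeH n k :=
  (∑ i ∈ Finset.Icc 1 (n + 1), XX n k i) - (∑ j ∈ Finset.Icc 1 k, VV n k j)

/-- The lattice `H`. -/
abbrev HLat (n k : ℕ) := FreeH n k ⧸ Submodule.span ℤ {relH n k}

/-- The class `xᵢ ∈ H`. -/
noncomputable def xH (n k i : ℕ) : HLat n k := Submodule.Quotient.mk (XX n k i)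

/-- The class `vⱼ ∈ H`. -/
noncomputable def vH (n k j : ℕ) : HLat n k := Submodule.Quotient.mk (VV n k j)

/-- The class `c_{i,j} = v_k + ⋯ + v_{j+1} − x₁ − ⋯ − x_i ∈ H`. -/
noncomputable def cH (n k i j : ℕ) : HLat n k :=
  (∑ j' ∈ Finset.Icc (j + 1) k, vH n k j') - (∑ i' ∈ Finset.Icc 1 i, xH n k i')

/-- The set `S_φ ⊆ H` attached to a nonincreasing function `φ : [1,n] → [1,k]`:
`S_φ = {v_j : j ∉ im φ} ⊔ {x_{i+1} : φ(i) = φ(i+1)} ⊔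
       {−c_{i,φ(i)} : φ(i−1) > φ(i) or i = 1} ⊔ {c_{i,φ(i)−1} : φ(i+1) < φ(i) or i = n}`. -/
def Sphi (n k : ℕ) (φ : ℕ → ℕ) : Set (HLat n k) :=
  {h | (∃ j, 1 ≤ j ∧ j ≤ k ∧ (∀ i, 1 ≤ i → i ≤ n → φ i ≠ j) ∧ h = vH n k j) ∨
       (∃ i, 1 ≤ i ∧ i + 1 ≤ n ∧ φ i = φ (i + 1) ∧ h = xH n k (i + 1)) ∨
       (∃ i, 1 ≤ i ∧ i ≤ n ∧ (i = 1 ∨ φ i < φ (i - 1)) ∧ h = - cH n k i (φ i)) ∨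
       (∃ i, 1 ≤ i ∧ i ≤ n ∧ (i = n ∨ φ (i + 1) < φ i) ∧ h = cH n k i (φ i - 1))}

/-!
STATEMENT 5: For a nonincreasing `φ : [1,n] → [1,k]`, every `vᵢ` (`1 ≤ i ≤ k`) and every
`xⱼ` (`1 ≤ j ≤ n+1`) lies in the set of nonnegative integer combinations of elements of
`S_φ` (the additive submonoid generated by `S_φ`) in the lattice `H`.
-/
lemma sum_Icc_split {M : Type*} [AddCommMonoid M] (f : ℕ → M) (a b c : ℕ)
    (h1 : a ≤ b + 1) (h2 : b ≤ c) :
    ∑ i ∈ Finset.Icc a c, f i = (∑ i ∈ Finset.Icc a b, f i) + ∑ i ∈ Finset.Icc (b+1) c, f i := by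
  rw [← Finset.sum_union]
  · apply Finset.sum_congr _ (fun _ _ => rfl)
    ext x; simp only [Finset.mem_union, Finset.mem_Icc]; omega
  · rw [Finset.disjoint_left]; intro x hx hx'
    simp only [Finset.mem_Icc] at hx hx'; omega

lemma rel_eq (n k : ℕ) :
    ∑ i ∈ Finset.Icc 1 (n+1), xH n k i = ∑ j ∈ Finset.Icc 1 k, vH n k j := by
  have h2 : (∑ i ∈ Finset.Icc 1 (n+1), xH n k i) - ∑ j ∈ Finset.Icc 1 k, vH n k j
      = (Submodule.span ℤ {relH n k}).mkQ (relH n k) := by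
    unfold relH; rw [map_sub, map_sum, map_sum]; rfl
  have h0 : (Submodule.span ℤ {relH n k}).mkQ (relH n k) = 0 := by
    simp [Submodule.Quotient.mk_eq_zero, Submodule.mem_span_singleton_self]
  rw [h0] at h2
  exact sub_eq_zero.mp h2
theorem stmt_5 (n k : ℕ) (φ : ℕ → ℕ)
    (hmono : ∀ i, 1 ≤ i → i + 1 ≤ n → φ (i + 1) ≤ φ i)
    (hrange : ∀ i, 1 ≤ i → i ≤ n → 1 ≤ φ i ∧ φ i ≤ k) :
    (∀ i : ℕ, 1 ≤ i → i ≤ k → vH n k i ∈ AddSubmonoid.closure (Sphi n k φ)) ∧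
    (∀ j : ℕ, 1 ≤ j → j ≤ n + 1 → xH n k j ∈ AddSubmonoid.closure (Sphi n k φ)) := by
  classical
  set Mcl := AddSubmonoid.closure (Sphi n k φ) with hMcl
  have hmono' : ∀ a b, 1 ≤ a → a ≤ b → b ≤ n → φ b ≤ φ a := by
    intro a b ha hab hbn
    induction b with
    | zero => omega
    | succ b ih =>
      rcases Nat.lt_or_ge a (b+1) with h | h
      · exact le_trans (hmono b (by omega) (by omega)) (ih (by omega) (by omega))
      · have : a = b + 1 := by omega
        subst this; exact le_rfl
  have vmem : ∀ j, 1 ≤ j → j ≤ k → vH n k j ∈ Mcl := by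
    intro j hj1 hjk
    by_cases hin : ∃ i, 1 ≤ i ∧ i ≤ n ∧ φ i = j
    · obtain ⟨i, hi1, hin', hij⟩ := hin
      have hne : ((Finset.Icc 1 n).filter (fun i => φ i = j)).Nonempty :=
        ⟨i, by rw [Finset.mem_filter, Finset.mem_Icc]; exact ⟨⟨hi1, hin'⟩, hij⟩⟩
      set i0 := ((Finset.Icc 1 n).filter (fun i => φ i = j)).min' hne with hi0def
      set i1 := ((Finset.Icc 1 n).filter (fun i => φ i = j)).max' hne with hi1def
      have hi0T := ((Finset.Icc 1 n).filter (fun i => φ i = j)).min'_mem hne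
      have hi1T := ((Finset.Icc 1 n).filter (fun i => φ i = j)).max'_mem hne
      rw [Finset.mem_filter, Finset.mem_Icc] at hi0T hi1T
      rw [← hi0def] at hi0T
      rw [← hi1def] at hi1T
      obtain ⟨⟨h01', h0n⟩, hφ0⟩ := hi0T
      obtain ⟨⟨h11', h1n⟩, hφ1⟩ := hi1T
      have h01 : i0 ≤ i1 := Finset.min'_le _ i1 (by
        rw [Finset.mem_filter, Finset.mem_Icc]; exact ⟨⟨h11', h1n⟩, hφ1⟩)
      have m1 : -cH n k i0 (φ i0) ∈ Sphi n k φ := by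
        refine Or.inr (Or.inr (Or.inl ⟨i0, h01', h0n, ?_, rfl⟩))
        by_cases h : i0 = 1
        · exact Or.inl h
        · refine Or.inr ?_
          have hle : φ i0 ≤ φ (i0 - 1) := by
            have := hmono (i0 - 1) (by omega) (by omega)
            rw [Nat.sub_add_cancel (by omega : 1 ≤ i0)] at this
            exact this
          have hne' : φ (i0 - 1) ≠ j := by
            intro he
            have hmem : i0 - 1 ∈ (Finset.Icc 1 n).filter (fun i => φ i = j) := by
              rw [Finset.mem_filter, Finset.mem_Icc]; exact ⟨⟨by omega, by omega⟩, he⟩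
            have := Finset.min'_le _ _ hmem
            omega
          omega
      have m2 : cH n k i1 (φ i1 - 1) ∈ Sphi n k φ := by
        refine Or.inr (Or.inr (Or.inr ⟨i1, h11', h1n, ?_, rfl⟩))
        by_cases h : i1 = n
        · exact Or.inl h
        · refine Or.inr ?_
          have hle : φ (i1 + 1) ≤ φ i1 := hmono i1 h11' (by omega)
          have hne' : φ (i1 + 1) ≠ j := by
            intro he
            have hmem : i1 + 1 ∈ (Finset.Icc 1 n).filter (fun i => φ i = j) := by
              rw [Finset.mem_filter, Finset.mem_Icc]; exact ⟨⟨by omega, by omega⟩, he⟩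
            have := Finset.le_max' _ _ hmem
            omega
          omega
      have m3 : ∀ l ∈ Finset.Icc (i0 + 1) i1, xH n k l ∈ Sphi n k φ := by
        intro l hl
        rw [Finset.mem_Icc] at hl
        have hφl : φ l = j := by
          have h1 := hmono' i0 l h01' (by omega) (by omega)
          have h2 := hmono' l i1 (by omega) hl.2 h1n
          omega
        have hφl1 : φ (l - 1) = j := by
          have h1 := hmono' i0 (l-1) h01' (by omega) (by omega)
          have h2 := hmono' (l-1) i1 (by omega) (by omega) h1n
          omega
        refine Or.inr (Or.inl ⟨l - 1, by omega, by omega, ?_, ?_⟩)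
        · rw [Nat.sub_add_cancel (by omega : 1 ≤ l)]; omega
        · rw [Nat.sub_add_cancel (by omega : 1 ≤ l)]
      have key : vH n k j = -cH n k i0 (φ i0) + cH n k i1 (φ i1 - 1)
          + ∑ l ∈ Finset.Icc (i0 + 1) i1, xH n k l := by
        rw [hφ0, hφ1, cH, cH]
        have e1 : j - 1 + 1 = j := by omega
        rw [e1]
        have e2 : (∑ j' ∈ Finset.Icc j k, vH n k j')
            = vH n k j + ∑ j' ∈ Finset.Icc (j+1) k, vH n k j' := by
          rw [sum_Icc_split (vH n k) j j k (by omega) hjk]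
          simp
        have e3 : (∑ i' ∈ Finset.Icc 1 i1, xH n k i')
            = (∑ i' ∈ Finset.Icc 1 i0, xH n k i') + ∑ i' ∈ Finset.Icc (i0+1) i1, xH n k i' :=
          sum_Icc_split (xH n k) 1 i0 i1 (by omega) h01
        rw [e2, e3]; abel
      rw [key]
      exact add_mem (add_mem (AddSubmonoid.subset_closure m1) (AddSubmonoid.subset_closure m2))
        (AddSubmonoid.sum_mem _ (fun l hl => AddSubmonoid.subset_closure (m3 l hl)))
    · push_neg at hin
      exact AddSubmonoid.subset_closure (Or.inl ⟨j, hj1, hjk, hin, rfl⟩)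
  have Vmem : ∀ a b, 1 ≤ a → b ≤ k → (∑ j' ∈ Finset.Icc a b, vH n k j') ∈ Mcl := by
    intro a b ha hb
    refine AddSubmonoid.sum_mem _ (fun j' hj' => ?_)
    rw [Finset.mem_Icc] at hj'
    exact vmem j' (by omega) (by omega)
  refine ⟨vmem, ?_⟩
  intro j hj1 hjn
  by_cases hn : n = 0
  · subst hn
    have hj : j = 1 := by omega
    subst hj
    have hx : xH 0 k 1 = ∑ j' ∈ Finset.Icc 1 k, vH 0 k j' := by
      have h := rel_eq 0 k
      simpa using h
    rw [hx]
    exact Vmem 1 k le_rfl le_rfl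
  · by_cases hj1' : j = 1
    · subst hj1'
      have m1 : -cH n k 1 (φ 1) ∈ Sphi n k φ :=
        Or.inr (Or.inr (Or.inl ⟨1, le_rfl, by omega, Or.inl rfl, rfl⟩))
      have hr1 := hrange 1 le_rfl (by omega)
      have key : xH n k 1 = -cH n k 1 (φ 1) + ∑ j' ∈ Finset.Icc (φ 1 + 1) k, vH n k j' := by
        rw [cH, Finset.Icc_self, Finset.sum_singleton]; abel
      rw [key]
      exact add_mem (AddSubmonoid.subset_closure m1) (Vmem _ _ (by omega) le_rfl)
    · by_cases hjn1 : j = n + 1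
      · subst hjn1
        have hφn := hrange n (by omega) le_rfl
        have m2 : cH n k n (φ n - 1) ∈ Sphi n k φ :=
          Or.inr (Or.inr (Or.inr ⟨n, by omega, le_rfl, Or.inl rfl, rfl⟩))
        have key : xH n k (n+1) = cH n k n (φ n - 1)
            + ∑ j' ∈ Finset.Icc 1 (φ n - 1), vH n k j' := by
          rw [cH]
          have e1 : φ n - 1 + 1 = φ n := by omega
          rw [e1]
          have e2 : (∑ j' ∈ Finset.Icc 1 k, vH n k j')
              = (∑ j' ∈ Finset.Icc 1 (φ n - 1), vH n k j')
                + ∑ j' ∈ Finset.Icc (φ n) k, vH n k j' := by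
            have h := sum_Icc_split (vH n k) 1 (φ n - 1) k (by omega) (by omega)
            rw [e1] at h
            exact h
          have e3 : (∑ i' ∈ Finset.Icc 1 (n+1), xH n k i')
              = (∑ i' ∈ Finset.Icc 1 n, xH n k i') + xH n k (n+1) := by
            rw [sum_Icc_split (xH n k) 1 n (n+1) (by omega) (by omega)]
            simp
          have hrel := rel_eq n k
          rw [e3, e2] at hrel
          calc xH n k (n+1)
              = ((∑ i' ∈ Finset.Icc 1 n, xH n k i') + xH n k (n+1))
                - (∑ i' ∈ Finset.Icc 1 n, xH n k i') := by abel
            _ = _ := by rw [hrel]; abel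
        rw [key]
        exact add_mem (AddSubmonoid.subset_closure m2) (Vmem _ _ le_rfl (by omega))
      · have hj2 : 2 ≤ j := by omega
        have hjn' : j ≤ n := by omega
        set i := j - 1 with hidef
        have hji : j = i + 1 := by omega
        by_cases heq : φ i = φ (i + 1)
        · refine AddSubmonoid.subset_closure (Or.inr (Or.inl ⟨i, by omega, by omega, heq, ?_⟩))
          rw [hji]
        · have hlt : φ (i+1) < φ i := by
            have := hmono i (by omega) (by omega)
            omega
          have hri := hrange i (by omega) (by omega)
          have hri1 := hrange (i+1) (by omega) (by omega)
          have m1 : -cH n k (i+1) (φ (i+1)) ∈ Sphi n k φ := by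
            refine Or.inr (Or.inr (Or.inl ⟨i+1, by omega, by omega, Or.inr ?_, rfl⟩))
            simpa using hlt
          have m2 : cH n k i (φ i - 1) ∈ Sphi n k φ :=
            Or.inr (Or.inr (Or.inr ⟨i, by omega, by omega, Or.inr hlt, rfl⟩))
          have key : xH n k (i+1) = -cH n k (i+1) (φ (i+1)) + cH n k i (φ i - 1)
              + ∑ j' ∈ Finset.Icc (φ (i+1) + 1) (φ i - 1), vH n k j' := by
            rw [cH, cH]
            have e1 : φ i - 1 + 1 = φ i := by omega
            rw [e1]
            have e2 : (∑ j' ∈ Finset.Icc (φ (i+1) + 1) k, vH n k j')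
                = (∑ j' ∈ Finset.Icc (φ (i+1) + 1) (φ i - 1), vH n k j')
                  + ∑ j' ∈ Finset.Icc (φ i) k, vH n k j' := by
              have h := sum_Icc_split (vH n k) (φ (i+1) + 1) (φ i - 1) k (by omega) (by omega)
              rw [e1] at h
              exact h
            have e3 : (∑ i' ∈ Finset.Icc 1 (i+1), xH n k i')
                = (∑ i' ∈ Finset.Icc 1 i, xH n k i') + xH n k (i+1) := by
              rw [sum_Icc_split (xH n k) 1 i (i+1) (by omega) (by omega)]
              simp
            rw [e2, e3]; abel
          rw [hji, key]
          exact add_mem (add_mem (AddSubmonoid.subset_closure m1) (AddSubmonoid.subset_closure m2))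
            (Vmem _ _ (by omega) (by omega))
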